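/- arXiv:1705.08510 — 7 statements merged into one kernel-verified Lean document; each statement's English description precedes it below -/
import Mathlib

section
/- The coordinate-wise integrator exactly preserves the Hamiltonian with Laplace kinetic energy: for every (θ, p) ∈ ℝ^d × ℝ^d, writing (θ', p') = Ψ(θ, p), one has U(θ') + Σ_{j=1}^d m_j⁻¹ |p'_j| = U(θ) + Σ_{j=1}^d m_j⁻¹ |p_j|. -/
open MeasureTheory

/-- The coordinate-wise integrator of discontinuous HMC: given `(θ, p)`, set
`θ* = θ + ε mᵢ⁻¹ sign(pᵢ) eᵢ` and `ΔU = U θ* − U θ`; if `mᵢ⁻¹ |pᵢ| > ΔU` then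
move to `(θ*, p − sign(pᵢ) mᵢ ΔU eᵢ)`, otherwise negate the `i`-th momentum. -/
noncomputable def coordIntegrator (d : ℕ) (i : Fin d) (m : Fin d → ℝ) (ε : ℝ)
    (U : (Fin d → ℝ) → ℝ) (x : (Fin d → ℝ) × (Fin d → ℝ)) :
    (Fin d → ℝ) × (Fin d → ℝ) :=
  let θ := x.1
  let p := x.2
  let θs := θ + (ε * (m i)⁻¹ * Real.sign (p i)) • (Pi.single i 1 : Fin d → ℝ)
  let ΔU := U θs - U θ
  if (m i)⁻¹ * |p i| > ΔU then
    (θs, p - (Real.sign (p i) * m i * ΔU) • (Pi.single i 1 : Fin d → ℝ))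
  else
    (θ, p - (2 * p i) • (Pi.single i 1 : Fin d → ℝ))

/-- The coordinate-wise integrator exactly preserves the Hamiltonian
`H(θ, p) = U(θ) + ∑ⱼ mⱼ⁻¹ |pⱼ|` with Laplace kinetic energy. -/
theorem coordIntegrator_preserves_hamiltonian
    (d : ℕ) (hd : 1 ≤ d) (i : Fin d) (m : Fin d → ℝ) (hm : ∀ j, 0 < m j)
    (ε : ℝ) (hε : 0 < ε) (U : (Fin d → ℝ) → ℝ) (θ p : Fin d → ℝ) :
    U (coordIntegrator d i m ε U (θ, p)).1
        + ∑ j, (m j)⁻¹ * |(coordIntegrator d i m ε U (θ, p)).2 j|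
      = U θ + ∑ j, (m j)⁻¹ * |p j| := by
  set θs := θ + (ε * (m i)⁻¹ * Real.sign (p i)) • (Pi.single i 1 : Fin d → ℝ) with hθs
  set ΔU := U θs - U θ with hΔU
  by_cases h : (m i)⁻¹ * |p i| > ΔU
  · have hpi : p i ≠ 0 := by
      intro h0
      have hts : θs = θ := by rw [hθs, h0, Real.sign_zero]; simp
      rw [h0, hΔU, hts] at h
      simp at h
    have hint : coordIntegrator d i m ε U (θ, p)
        = (θs, p - (Real.sign (p i) * m i * ΔU) • (Pi.single i 1 : Fin d → ℝ)) := by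
      simp only [coordIntegrator]
      rw [if_pos h]
    rw [hint]
    simp only
    have hsum : ∀ (q : Fin d → ℝ),
        ∑ j, (m j)⁻¹ * |q j| = (m i)⁻¹ * |q i| + ∑ j ∈ Finset.univ.erase i, (m j)⁻¹ * |q j| :=
      fun q => (Finset.add_sum_erase _ _ (Finset.mem_univ i)).symm
    rw [hsum (p - _), hsum p]
    have herase : ∑ j ∈ Finset.univ.erase i,
        (m j)⁻¹ * |(p - (Real.sign (p i) * m i * ΔU) • (Pi.single i 1 : Fin d → ℝ)) j|
        = ∑ j ∈ Finset.univ.erase i, (m j)⁻¹ * |p j| := by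
      apply Finset.sum_congr rfl
      intro j hj
      have : j ≠ i := Finset.ne_of_mem_erase hj
      simp [Pi.single_apply, this]
    rw [herase]
    have hval : (p - (Real.sign (p i) * m i * ΔU) • (Pi.single i 1 : Fin d → ℝ)) i
        = p i - Real.sign (p i) * m i * ΔU := by simp
    rw [hval]
    have hs : Real.sign (p i) * p i = |p i| := by
      rcases lt_trichotomy (p i) 0 with hlt | heq | hgt
      · rw [Real.sign_of_neg hlt, abs_of_neg hlt]; ring
      · exact absurd heq hpi
      · rw [Real.sign_of_pos hgt, abs_of_pos hgt]; ring
    have hs2 : Real.sign (p i) * Real.sign (p i) = 1 := by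
      rcases lt_trichotomy (p i) 0 with hlt | heq | hgt
      · rw [Real.sign_of_neg hlt]; ring
      · exact absurd heq hpi
      · rw [Real.sign_of_pos hgt]; ring
    have habs : |p i - Real.sign (p i) * m i * ΔU| = |p i| - m i * ΔU := by
      have key : Real.sign (p i) * (p i - Real.sign (p i) * m i * ΔU) = |p i| - m i * ΔU := by
        have : Real.sign (p i) * (p i - Real.sign (p i) * m i * ΔU)
            = Real.sign (p i) * p i - (Real.sign (p i) * Real.sign (p i)) * (m i * ΔU) := by ring
        rw [this, hs, hs2]; ring
      have hpos : 0 < |p i| - m i * ΔU := by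
        have := (hm i)
        have h2 : m i * ΔU < m i * ((m i)⁻¹ * |p i|) := by
          exact mul_lt_mul_of_pos_left h this
        rw [← mul_assoc, mul_inv_cancel₀ (ne_of_gt this), one_mul] at h2
        linarith
      have habs1 : |p i - Real.sign (p i) * m i * ΔU|
          = |Real.sign (p i) * (p i - Real.sign (p i) * m i * ΔU)| := by
        rw [abs_mul]
        rcases lt_trichotomy (p i) 0 with hlt | heq | hgt
        · rw [Real.sign_of_neg hlt]; simp
        · exact absurd heq hpi
        · rw [Real.sign_of_pos hgt]; simp
      rw [habs1, key, abs_of_pos hpos]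
    rw [habs]
    have : (m i)⁻¹ * (|p i| - m i * ΔU) = (m i)⁻¹ * |p i| - ΔU := by
      rw [mul_sub, ← mul_assoc, inv_mul_cancel₀ (ne_of_gt (hm i)), one_mul]
    rw [this, hΔU]
    ring
  · have hint : coordIntegrator d i m ε U (θ, p)
        = (θ, p - (2 * p i) • (Pi.single i 1 : Fin d → ℝ)) := by
      simp only [coordIntegrator]
      rw [if_neg h]
    rw [hint]
    simp only
    congr 1
    apply Finset.sum_congr rfl
    intro j _
    by_cases hji : j = i
    · subst hji
      simp only [Pi.sub_apply, Pi.smul_apply, Pi.single_eq_same, smul_eq_mul, mul_one]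
      rw [show p j - 2 * p j = -(p j) from by ring, abs_neg]
    · simp [Pi.single_apply, hji]
end

section
/- The coordinate-wise integrator is reversible: letting R(θ, p) = (θ, −p) denote the momentum flip, for every (θ, p) ∈ ℝ^d × ℝ^d with p_i ≠ 0 one has (R ∘ Ψ)((R ∘ Ψ)(θ, p)) = (θ, p). -/
lemma coordIntegrator_eval (d : ℕ) (i : Fin d) (m : Fin d → ℝ) (ε : ℝ)
    (U : (Fin d → ℝ) → ℝ) (θ p : Fin d → ℝ) :
    coordIntegrator d i m ε U (θ, p) =
    if (m i)⁻¹ * |p i| >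
        U (θ + (ε * (m i)⁻¹ * Real.sign (p i)) • (Pi.single i 1 : Fin d → ℝ)) - U θ then
      (θ + (ε * (m i)⁻¹ * Real.sign (p i)) • (Pi.single i 1 : Fin d → ℝ),
        p - (Real.sign (p i) * m i *
          (U (θ + (ε * (m i)⁻¹ * Real.sign (p i)) • (Pi.single i 1 : Fin d → ℝ)) - U θ))
          • (Pi.single i 1 : Fin d → ℝ))
    else
      (θ, p - (2 * p i) • (Pi.single i 1 : Fin d → ℝ)) := rfl

/-- The coordinate-wise integrator is reversible: with the momentum flip
`R(θ, p) = (θ, −p)`, for every `(θ, p)` with `pᵢ ≠ 0` one has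
`(R ∘ Ψ)((R ∘ Ψ)(θ, p)) = (θ, p)`. -/
theorem coordIntegrator_reversible
    (d : ℕ) (hd : 1 ≤ d) (i : Fin d) (m : Fin d → ℝ) (hm : 0 < m i)
    (ε : ℝ) (hε : 0 < ε) (U : (Fin d → ℝ) → ℝ)
    (θ p : Fin d → ℝ) (hp : p i ≠ 0) :
    let R : (Fin d → ℝ) × (Fin d → ℝ) → (Fin d → ℝ) × (Fin d → ℝ) := fun x => (x.1, -x.2)
    (R ∘ coordIntegrator d i m ε U) ((R ∘ coordIntegrator d i m ε U) (θ, p)) = (θ, p) := by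
  intro R
  have hm' : (0:ℝ) < (m i)⁻¹ := inv_pos.mpr hm
  -- the sign of p i
  obtain ⟨s, hs, habs, hss⟩ :
      ∃ s : ℝ, Real.sign (p i) = s ∧ |p i| = s * p i ∧ s * s = 1 := by
    rcases hp.lt_or_gt with h | h
    · exact ⟨-1, Real.sign_of_neg h, by rw [abs_of_neg h]; ring, by norm_num⟩
    · exact ⟨1, Real.sign_of_pos h, by rw [abs_of_pos h]; ring, by norm_num⟩
  set e : Fin d → ℝ := Pi.single i 1 with he
  have hei : e i = 1 := Pi.single_eq_same i 1
  set θs : Fin d → ℝ := θ + (ε * (m i)⁻¹ * s) • e with hθs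
  set ΔU : ℝ := U θs - U θ with hΔU
  have hback : θs + (ε * (m i)⁻¹ * -s) • e = θ := by
    rw [hθs, add_assoc, ← add_smul]
    simp
  have habspos : 0 < |p i| := abs_pos.mpr hp
  by_cases hC : (m i)⁻¹ * |p i| > ΔU
  · -- accepted step
    have h1 : coordIntegrator d i m ε U (θ, p) = (θs, p - (s * m i * ΔU) • e) := by
      rw [coordIntegrator_eval, hs, ← he, ← hθs, ← hΔU, if_pos hC]
    -- the flipped momentum
    set q : Fin d → ℝ := -(p - (s * m i * ΔU) • e) with hq
    have hqi : q i = s * m i * ΔU - p i := by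
      simp [hq, hei]
    have hmlt : m i * ΔU < |p i| := by
      have := (mul_lt_mul_iff_right₀ hm).mpr hC
      calc m i * ΔU < m i * ((m i)⁻¹ * |p i|) := this
        _ = |p i| := by field_simp
    have hq_sign : Real.sign (q i) = -s := by
      rcases mul_self_eq_one_iff.mp hss with h1 | h1
      · subst h1
        have : q i < 0 := by rw [hqi]; nlinarith [habs]
        rw [Real.sign_of_neg this]
      · subst h1
        have : 0 < q i := by rw [hqi]; nlinarith [habs]
        rw [Real.sign_of_pos this]; ring
    have hqabs : |q i| = |p i| - m i * ΔU := by
      rcases mul_self_eq_one_iff.mp hss with h1 | h1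
      · subst h1
        rw [abs_of_neg (show q i < 0 by rw [hqi]; nlinarith [habs]), hqi]
        rw [habs] at hmlt ⊢; ring_nf
      · subst h1
        rw [abs_of_pos (show 0 < q i by rw [hqi]; nlinarith [habs]), hqi]
        rw [habs] at hmlt ⊢; ring_nf
    have hqabs' : |q i| = |p i| - m i * ΔU := hqabs
    have hC2 : (m i)⁻¹ * |q i| > -ΔU := by
      rw [hqabs]
      have : (m i)⁻¹ * (|p i| - m i * ΔU) = (m i)⁻¹ * |p i| - ΔU := by
        field_simp
      rw [this]
      nlinarith [mul_pos hm' habspos]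
    have h2 : coordIntegrator d i m ε U (θs, q) = (θ, q - (-s * m i * -ΔU) • e) := by
      rw [coordIntegrator_eval, hq_sign, ← he]
      rw [show θs + (ε * (m i)⁻¹ * -s) • e = θ from hback]
      rw [show U θ - U θs = -ΔU by rw [hΔU]; ring]
      rw [if_pos hC2]
    simp only [Function.comp_apply, h1, R]
    rw [show (-(p - (s * m i * ΔU) • e)) = q from rfl] at *
    rw [h2]
    have hfin : -(q - (-s * m i * -ΔU) • e) = p := by
      show -(-(p - (s * m i * ΔU) • e) - (-s * m i * -ΔU) • e) = p
      rw [show -s * m i * -ΔU = s * m i * ΔU by ring]; abel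
    exact Prod.ext rfl hfin
  · -- rejected step
    have h1 : coordIntegrator d i m ε U (θ, p) = (θ, p - (2 * p i) • e) := by
      rw [coordIntegrator_eval, hs, ← he, ← hθs, ← hΔU, if_neg hC]
    set q : Fin d → ℝ := -(p - (2 * p i) • e) with hq
    have hqi : q i = p i := by simp [hq, hei]; ring
    have h2 : coordIntegrator d i m ε U (θ, q) = (θ, q - (2 * q i) • e) := by
      rw [coordIntegrator_eval, hqi, hs, ← he, ← hθs, ← hΔU, if_neg hC]
    simp only [Function.comp_apply, h1, R]
    rw [show (-(p - (2 * p i) • e)) = q from rfl]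
    rw [h2]
    have hfin : -(q - (2 * q i) • e) = p := by
      rw [hqi]
      show -(-(p - (2 * p i) • e) - (2 * p i) • e) = p
      abel
    exact Prod.ext rfl hfin
end

section
/- The coordinate-wise integrator has unit Jacobian: let (θ, p) ∈ ℝ^d × ℝ^d with p_i ≠ 0, suppose U is differentiable at θ and at θ* = θ + ε m_i⁻¹ sign(p_i) e_i, and suppose the strict inequality m_i⁻¹ |p_i| > U(θ*) − U(θ) either holds on a neighborhood of (θ, p) or fails on a neighborhood of (θ, p). Then Ψ is differentiable at (θ, p) and the determinant of its derivative (as a linear map on ℝ^d × ℝ^d ≅ ℝ^{2d}) has absolute value 1. -/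
lemma det_block_aux (d : ℕ) (f g : (Fin d → ℝ) →ₗ[ℝ] (Fin d → ℝ))
    (L : ((Fin d → ℝ) × (Fin d → ℝ)) →ₗ[ℝ] ((Fin d → ℝ) × (Fin d → ℝ)))
    (hL : ∀ v w, L (v, w) = (v, g w + f v)) :
    LinearMap.det L = LinearMap.det g := by
  classical
  set b := Pi.basisFun ℝ (Fin d) with hb
  set B := b.prod b with hB
  rw [← LinearMap.det_toMatrix B L, ← LinearMap.det_toMatrix b g]
  have hM : LinearMap.toMatrix B B L =
      Matrix.fromBlocks 1 0 (LinearMap.toMatrix b b f) (LinearMap.toMatrix b b g) := by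
    ext j k
    have hBinl : ∀ k, B (Sum.inl k) = (b k, 0) := by
      intro k; rw [hB, Module.Basis.prod_apply]; simp
    have hBinr : ∀ k, B (Sum.inr k) = (0, b k) := by
      intro k; rw [hB, Module.Basis.prod_apply]; simp
    cases j with
    | inl j =>
      cases k with
      | inl k =>
        simp [LinearMap.toMatrix_apply, hBinl, hL, hB, Matrix.fromBlocks, Matrix.one_apply,
          Module.Basis.repr_self, Finsupp.single_apply, eq_comm]
      | inr k =>
        simp [LinearMap.toMatrix_apply, hBinr, hL, hB, Matrix.fromBlocks]
    | inr j =>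
      cases k with
      | inl k =>
        simp [LinearMap.toMatrix_apply, hBinl, hL, hB, Matrix.fromBlocks]
      | inr k =>
        simp [LinearMap.toMatrix_apply, hBinr, hL, hB, Matrix.fromBlocks]
  rw [hM, Matrix.det_fromBlocks_zero₁₂, Matrix.det_one, one_mul]

lemma det_reflect (d : ℕ) (i : Fin d) (R : (Fin d → ℝ) →ₗ[ℝ] (Fin d → ℝ))
    (hR : ∀ w, R w = w - (2 * w i) • (Pi.single i 1 : Fin d → ℝ)) :
    LinearMap.det R = -1 := by
  classical
  set b := Pi.basisFun ℝ (Fin d) with hb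
  rw [← LinearMap.det_toMatrix b R]
  have hM : LinearMap.toMatrix b b R
      = Matrix.diagonal (fun j => if j = i then (-1 : ℝ) else 1) := by
    ext j k
    simp only [LinearMap.toMatrix_apply, hb, hR, Pi.basisFun_apply, Pi.basisFun_repr,
      Pi.sub_apply, Pi.smul_apply, Pi.single_apply, smul_eq_mul, Matrix.diagonal_apply]
    by_cases hjk : j = k <;> by_cases hji : j = i <;> simp_all <;> norm_num
  rw [hM, Matrix.det_diagonal]
  rw [Finset.prod_ite_eq' Finset.univ i (fun _ => (-1 : ℝ))]
  simp

/-- The coordinate-wise integrator has unit Jacobian: at a point `(θ, p)` with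
`pᵢ ≠ 0`, where `U` is differentiable at `θ` and at `θ* = θ + ε mᵢ⁻¹ sign(pᵢ) eᵢ`,
and where the acceptance test `mᵢ⁻¹|pᵢ| > U(θ*) − U(θ)` either holds on a
neighborhood or fails on a neighborhood of `(θ, p)`, the map `Ψ` is
differentiable and the determinant of its derivative has absolute value `1`. -/
theorem coordIntegrator_unit_jacobian
    (d : ℕ) (hd : 1 ≤ d) (i : Fin d) (m : Fin d → ℝ) (hm : 0 < m i)
    (ε : ℝ) (hε : 0 < ε) (U : (Fin d → ℝ) → ℝ)
    (θ p : Fin d → ℝ) (hp : p i ≠ 0)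
    (hU₁ : DifferentiableAt ℝ U θ)
    (hU₂ : DifferentiableAt ℝ U
      (θ + (ε * (m i)⁻¹ * Real.sign (p i)) • (Pi.single i 1 : Fin d → ℝ)))
    (hC : (∀ᶠ x : (Fin d → ℝ) × (Fin d → ℝ) in nhds (θ, p),
            (m i)⁻¹ * |x.2 i| >
              U (x.1 + (ε * (m i)⁻¹ * Real.sign (x.2 i)) • (Pi.single i 1 : Fin d → ℝ))
                - U x.1)
        ∨ (∀ᶠ x : (Fin d → ℝ) × (Fin d → ℝ) in nhds (θ, p),
            ¬((m i)⁻¹ * |x.2 i| >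
              U (x.1 + (ε * (m i)⁻¹ * Real.sign (x.2 i)) • (Pi.single i 1 : Fin d → ℝ))
                - U x.1))) :
    DifferentiableAt ℝ (coordIntegrator d i m ε U) (θ, p) ∧
      |LinearMap.det ((fderiv ℝ (coordIntegrator d i m ε U) (θ, p)).toLinearMap)| = 1 := by
  classical
  set e : Fin d → ℝ := (Pi.single i 1 : Fin d → ℝ) with he
  set s : ℝ := Real.sign (p i) with hs
  set c : ℝ := ε * (m i)⁻¹ * s with hc
  -- the sign is locally constant
  have hcont : ContinuousAt (fun x : (Fin d → ℝ) × (Fin d → ℝ) => x.2 i) (θ, p) :=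
    ((continuous_apply i).comp continuous_snd).continuousAt
  have hsign : ∀ᶠ x : (Fin d → ℝ) × (Fin d → ℝ) in nhds (θ, p), Real.sign (x.2 i) = s := by
    rcases hp.lt_or_gt with h | h
    · have h2 : ∀ᶠ x : (Fin d → ℝ) × (Fin d → ℝ) in nhds (θ, p), x.2 i < 0 :=
        hcont.eventually (Iio_mem_nhds h)
      filter_upwards [h2] with x hx
      rw [Real.sign_of_neg hx, hs, Real.sign_of_neg h]
    · have h2 : ∀ᶠ x : (Fin d → ℝ) × (Fin d → ℝ) in nhds (θ, p), 0 < x.2 i :=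
        hcont.eventually (Ioi_mem_nhds h)
      filter_upwards [h2] with x hx
      rw [Real.sign_of_pos hx, hs, Real.sign_of_pos h]
  rcases hC with hacc | hrej
  · -- acceptance branch
    have heq : coordIntegrator d i m ε U =ᶠ[nhds (θ, p)]
        fun x : (Fin d → ℝ) × (Fin d → ℝ) => (x.1 + c • e, x.2 - (s * m i * (U (x.1 + c • e) - U x.1)) • e) := by
      filter_upwards [hsign, hacc] with x hx hx2
      simp only [coordIntegrator]
      rw [hx] at hx2 ⊢
      rw [if_pos hx2]
    -- derivative of the model map
    have hg : HasFDerivAt (fun x : (Fin d → ℝ) × (Fin d → ℝ) => x.1 + c • e)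
        (ContinuousLinearMap.fst ℝ (Fin d → ℝ) (Fin d → ℝ)) (θ, p) := (hasFDerivAt_fst).add_const _
    have h2 : HasFDerivAt (fun x : (Fin d → ℝ) × (Fin d → ℝ) => U (x.1 + c • e))
        ((fderiv ℝ U (θ + c • e)).comp (ContinuousLinearMap.fst ℝ (Fin d → ℝ) (Fin d → ℝ))) (θ, p) :=
      (hU₂.hasFDerivAt).comp (θ, p) hg
    have h1 : HasFDerivAt (fun x : (Fin d → ℝ) × (Fin d → ℝ) => U x.1)
        ((fderiv ℝ U θ).comp (ContinuousLinearMap.fst ℝ (Fin d → ℝ) (Fin d → ℝ))) (θ, p) :=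
      (hU₁.hasFDerivAt).comp (θ, p) hasFDerivAt_fst
    have hφ : HasFDerivAt (fun x : (Fin d → ℝ) × (Fin d → ℝ) => s * m i * (U (x.1 + c • e) - U x.1))
        ((s * m i) • ((fderiv ℝ U (θ + c • e)).comp (ContinuousLinearMap.fst ℝ (Fin d → ℝ) (Fin d → ℝ))
          - (fderiv ℝ U θ).comp (ContinuousLinearMap.fst ℝ (Fin d → ℝ) (Fin d → ℝ)))) (θ, p) :=
      (h2.sub h1).const_mul (s * m i)
    have hsm := hφ.smul_const e
    have hF := hg.prodMk (hasFDerivAt_snd.sub hsm)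
    have hΨ := hF.congr_of_eventuallyEq heq
    refine ⟨hΨ.differentiableAt, ?_⟩
    rw [hΨ.fderiv]
    set D2 := (fderiv ℝ U (θ + c • e)).comp (ContinuousLinearMap.fst ℝ (Fin d → ℝ) (Fin d → ℝ))
    set D1 := (fderiv ℝ U θ).comp (ContinuousLinearMap.fst ℝ (Fin d → ℝ) (Fin d → ℝ))
    have hdet : LinearMap.det
        (((ContinuousLinearMap.fst ℝ (Fin d → ℝ) (Fin d → ℝ)).prod (ContinuousLinearMap.snd ℝ (Fin d → ℝ) (Fin d → ℝ)
          - (((s * m i) • (D2 - D1)).smulRight e))).toLinearMap) = LinearMap.det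
          (LinearMap.id : (Fin d → ℝ) →ₗ[ℝ] (Fin d → ℝ)) := by
      apply det_block_aux d
        (-(LinearMap.smulRight ((s * m i) • ((fderiv ℝ U (θ + c • e)).toLinearMap
          - (fderiv ℝ U θ).toLinearMap)) e))
      intro v w
      refine Prod.ext ?_ ?_
      · simp
      · show w - (s * m i * (D2 (v, w) - D1 (v, w))) • e = _
        simp only [D2, D1, ContinuousLinearMap.coe_comp', Function.comp_apply,
          ContinuousLinearMap.coe_fst', LinearMap.neg_apply, LinearMap.smulRight_apply,
          LinearMap.smul_apply, LinearMap.sub_apply, ContinuousLinearMap.coe_coe,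
          smul_eq_mul, sub_eq_add_neg]
        simp only [← neg_smul, ← add_smul]
        congr 1
        try ring
    rw [hdet, LinearMap.det_id]
    simp
  · -- rejection branch
    set G : ((Fin d → ℝ) × (Fin d → ℝ)) →L[ℝ] ((Fin d → ℝ) × (Fin d → ℝ)) :=
      (ContinuousLinearMap.fst ℝ (Fin d → ℝ) (Fin d → ℝ)).prod (ContinuousLinearMap.snd ℝ (Fin d → ℝ) (Fin d → ℝ)
        - (((2 : ℝ) • ((ContinuousLinearMap.proj i).comp
            (ContinuousLinearMap.snd ℝ (Fin d → ℝ) (Fin d → ℝ)))).smulRight e)) with hG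
    have hGapp : ∀ x : (Fin d → ℝ) × (Fin d → ℝ), G x = (x.1, x.2 - (2 * x.2 i) • e) := by
      intro x; simp [hG]
    have heq : coordIntegrator d i m ε U =ᶠ[nhds (θ, p)] G := by
      filter_upwards [hrej] with x hx2
      simp only [coordIntegrator]
      rw [if_neg hx2]
      exact (hGapp x).symm
    have hΨ := (G.hasFDerivAt (x := (θ, p))).congr_of_eventuallyEq heq
    refine ⟨hΨ.differentiableAt, ?_⟩
    rw [hΨ.fderiv]
    set R : (Fin d → ℝ) →ₗ[ℝ] (Fin d → ℝ) :=
      LinearMap.id - (LinearMap.smulRight ((2 : ℝ) • (LinearMap.proj i : (Fin d → ℝ) →ₗ[ℝ] ℝ)) e) with hR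
    have hRapp : ∀ w : Fin d → ℝ, R w = w - (2 * w i) • e := by
      intro w; simp [hR, smul_smul]
    have hdet : LinearMap.det (G.toLinearMap) = LinearMap.det R := by
      apply det_block_aux d 0
      intro v w
      refine Prod.ext ?_ ?_
      · simp [hG]
      · simp [hG, hRapp, smul_smul]
    rw [hdet, det_reflect d i R hRapp]
    simp
end

section
/- For every m > 0 and every Δ ∈ ℝ, the probability under the Laplace distribution with scale m that the scaled absolute momentum exceeds Δ equals the Metropolis acceptance probability: (1/(2m)) ∫_ℝ exp(−|p|/m) · 1{m⁻¹|p| > Δ} dp = min(1, exp(−Δ)). -/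
open MeasureTheory

/-- The probability under the Laplace distribution with scale `m` that the
scaled absolute momentum exceeds `Δ` equals the Metropolis acceptance
probability: `(1/(2m)) ∫ exp(−|p|/m) 1{m⁻¹|p| > Δ} dp = min(1, exp(−Δ))`. -/
theorem laplace_tail_eq_metropolis_acceptance (m Δ : ℝ) (hm : 0 < m) :
    (1 / (2 * m)) *
        ∫ p : ℝ, Real.exp (-|p| / m) * (if m⁻¹ * |p| > Δ then (1 : ℝ) else 0)
      = min 1 (Real.exp (-Δ)) := by
  have h1 : (∫ p : ℝ, Real.exp (-|p| / m) * (if m⁻¹ * |p| > Δ then (1 : ℝ) else 0))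
      = 2 * ∫ x in Set.Ioi (0:ℝ),
          Real.exp (-x / m) * (if m⁻¹ * x > Δ then (1:ℝ) else 0) :=
    integral_comp_abs (f := fun t => Real.exp (-t / m) * (if m⁻¹ * t > Δ then (1:ℝ) else 0))
  have h2 : (∫ x in Set.Ioi (0:ℝ), Real.exp (-x / m) * (if m⁻¹ * x > Δ then (1:ℝ) else 0))
      = m * ∫ x in Set.Ioi (0:ℝ), Real.exp (-x) * (if x > Δ then (1:ℝ) else 0) := by
    have h := MeasureTheory.integral_comp_mul_left_Ioi
      (fun t => Real.exp (-t / m) * (if m⁻¹ * t > Δ then (1:ℝ) else 0)) 0 hm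
    rw [mul_zero] at h
    have hsimp : ∀ x : ℝ, Real.exp (-(m * x) / m) * (if m⁻¹ * (m * x) > Δ then (1:ℝ) else 0)
        = Real.exp (-x) * (if x > Δ then (1:ℝ) else 0) := by
      intro x
      rw [inv_mul_cancel_left₀ hm.ne', neg_div, mul_div_cancel_left₀ _ hm.ne']
    simp only [hsimp] at h
    rw [h, smul_eq_mul, ← mul_assoc, mul_inv_cancel₀ hm.ne', one_mul]
  have h3 : (∫ x in Set.Ioi (0:ℝ), Real.exp (-x) * (if x > Δ then (1:ℝ) else 0))
      = Real.exp (-(max 0 Δ)) := by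
    have heq : ∀ x : ℝ, Real.exp (-x) * (if x > Δ then (1:ℝ) else 0)
        = (Set.Ioi Δ).indicator (fun x => Real.exp (-x)) x := by
      intro x
      simp [Set.indicator_apply, Set.mem_Ioi, mul_ite, eq_comm]
    simp only [heq]
    rw [setIntegral_indicator measurableSet_Ioi, Set.Ioi_inter_Ioi,
      integral_exp_neg_Ioi]
  rw [h1, h2, h3]
  have hmin : min 1 (Real.exp (-Δ)) = Real.exp (-(max 0 Δ)) := by
    rw [show (1:ℝ) = Real.exp 0 by simp, ← Real.exp_monotone.map_min]
    congr 1
    rcases le_total 0 Δ with h | h <;> simp [max_eq_right, max_eq_left, min_eq_right, min_eq_left, h, neg_nonpos_of_nonneg, neg_nonneg.mpr]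
  rw [hmin]
  field_simp
end

section
/- One coordinate-wise integrator step with Laplace momentum coincides with a Metropolis step: fix θ ∈ ℝ^d, an index j, a mass m > 0, a stepsize ε > 0, and a measurable potential U : ℝ^d → ℝ. Let μ be the Laplace distribution with scale m on ℝ, and define T : ℝ → ℝ^d by T(p) = θ + ε m⁻¹ sign(p) e_j if m⁻¹|p| > U(θ + ε m⁻¹ sign(p) e_j) − U(θ), and T(p) = θ otherwise. Writing θ_± = θ ± ε m⁻¹ e_j, Δ_± = U(θ_±) − U(θ) and a_± = min(1, exp(−Δ_±)), the pushforward of μ under T equals (a_+/2) δ_{θ_+} + (a_−/2) δ_{θ_−} + (1 − a_+/2 − a_−/2) δ_θ. -/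
open MeasureTheory Set Real

lemma integral_exp_neg_div_Ioi {m : ℝ} (hm : 0 < m) (c : ℝ) :
    ∫ x in Ioi c, Real.exp (-x / m) = m * Real.exp (-c / m) := by
  have h : ∀ x : ℝ, Real.exp (-x / m) = (fun y => Real.exp (-y)) (m⁻¹ * x) := by
    intro x; simp [neg_div, div_eq_inv_mul]
  simp_rw [h]
  rw [integral_comp_mul_left_Ioi (fun y => Real.exp (-y)) c (inv_pos.mpr hm)]
  rw [integral_exp_neg_Ioi]
  simp [smul_eq_mul, inv_inv, neg_div, div_eq_inv_mul, mul_comm]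

lemma integrableOn_exp_neg_div_Ioi {m : ℝ} (hm : 0 < m) (c : ℝ) :
    IntegrableOn (fun x => Real.exp (-x / m)) (Ioi c) := by
  have := exp_neg_integrableOn_Ioi c (inv_pos.mpr hm)
  simpa [neg_div, div_eq_inv_mul] using this

lemma laplace_meas_Ioi {m : ℝ} (hm : 0 < m) {c : ℝ} (hc : 0 ≤ c) :
    (volume.withDensity fun p => ENNReal.ofReal ((2 * m)⁻¹ * Real.exp (-|p| / m)))
      (Ioi c) = ENNReal.ofReal (Real.exp (-c / m) / 2) := by
  rw [withDensity_apply _ measurableSet_Ioi]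
  have h1 : ∫⁻ p in Ioi c, ENNReal.ofReal ((2 * m)⁻¹ * Real.exp (-|p| / m))
      = ∫⁻ p in Ioi c, ENNReal.ofReal ((2 * m)⁻¹ * Real.exp (-p / m)) := by
    apply setLIntegral_congr_fun measurableSet_Ioi
    intro p hp; beta_reduce
    rw [abs_of_pos (lt_of_le_of_lt hc hp)]
  rw [h1, ← ofReal_integral_eq_lintegral_ofReal]
  · rw [integral_const_mul, integral_exp_neg_div_Ioi hm c]
    congr 1
    field_simp
  · exact (integrableOn_exp_neg_div_Ioi hm c).const_mul _
  · filter_upwards with p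
    positivity

lemma laplace_meas_Iio {m : ℝ} (hm : 0 < m) {c : ℝ} (hc : 0 ≤ c) :
    (volume.withDensity fun p => ENNReal.ofReal ((2 * m)⁻¹ * Real.exp (-|p| / m)))
      (Iio (-c)) = ENNReal.ofReal (Real.exp (-c / m) / 2) := by
  have hmp : MeasurePreserving (fun x : ℝ => -x) volume volume :=
    Measure.measurePreserving_neg _
  have hemb : MeasurableEmbedding (fun x : ℝ => -x) :=
    (Homeomorph.neg ℝ).isClosedEmbedding.measurableEmbedding
  have himg : (fun x : ℝ => -x) '' (Iio (-c)) = Ioi c := by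
    ext x
    simp only [Set.mem_image, Set.mem_Iio, Set.mem_Ioi]
    constructor
    · rintro ⟨y, hy, rfl⟩; linarith
    · intro hx; exact ⟨-x, by linarith, by ring⟩
  have key := hmp.setLIntegral_comp_emb hemb
    (fun p => ENNReal.ofReal ((2 * m)⁻¹ * Real.exp (-|p| / m))) (Iio (-c))
  rw [himg] at key
  simp only [abs_neg] at key
  rw [withDensity_apply _ measurableSet_Iio, key,
    ← withDensity_apply _ measurableSet_Ioi]
  exact laplace_meas_Ioi hm hc

lemma laplace_meas_univ {m : ℝ} (hm : 0 < m) :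
    (volume.withDensity fun p => ENNReal.ofReal ((2 * m)⁻¹ * Real.exp (-|p| / m)))
      Set.univ = 1 := by
  set μ := volume.withDensity fun p => ENNReal.ofReal ((2 * m)⁻¹ * Real.exp (-|p| / m))
    with hμ
  have h0 : μ {(0 : ℝ)} = 0 :=
    (withDensity_absolutelyContinuous _ _) (measure_singleton 0)
  have hU : (Iio (0 : ℝ)) ∪ Ici 0 = Set.univ := Iio_union_Ici
  have hD : Disjoint (Iio (0 : ℝ)) (Ici 0) := Iio_disjoint_Ici le_rfl
  have h1 : μ Set.univ = μ (Iio 0) + μ (Ici 0) := by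
    rw [← hU, measure_union hD measurableSet_Ici]
  have h2 : μ (Ici (0 : ℝ)) = μ (Ioi 0) := by
    rw [← Ioi_union_left, measure_union (by simp) (measurableSet_singleton 0), h0, add_zero]
  have h3 : μ (Ioi (0 : ℝ)) = ENNReal.ofReal (1 / 2) := by
    rw [hμ, laplace_meas_Ioi hm le_rfl]
    norm_num
  have h4 : μ (Iio (0 : ℝ)) = ENNReal.ofReal (1 / 2) := by
    have := laplace_meas_Iio hm (le_refl (0:ℝ))
    rw [neg_zero] at this
    rw [hμ, this]
    norm_num
  rw [h1, h2, h3, h4, ← ENNReal.ofReal_add (by norm_num) (by norm_num)]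
  norm_num

lemma exp_neg_max_eq_min (Δ : ℝ) :
    Real.exp (-(max 0 Δ)) = min 1 (Real.exp (-Δ)) := by
  rcases le_total 0 Δ with h | h
  · rw [max_eq_right h, min_eq_right]
    exact Real.exp_le_one_iff.mpr (by linarith)
  · rw [max_eq_left h, neg_zero, Real.exp_zero, min_eq_left]
    exact Real.one_le_exp (by linarith)

/-- One coordinate-wise integrator step with Laplace momentum coincides with a
Metropolis step: the pushforward of the Laplace distribution with scale `m`
under the map `T` (sending `p` to `θ + ε m⁻¹ sign(p) eⱼ` if
`m⁻¹|p| > U(θ + ε m⁻¹ sign(p) eⱼ) − U(θ)` and to `θ` otherwise) equals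
`(a₊/2) δ_{θ₊} + (a₋/2) δ_{θ₋} + (1 − a₊/2 − a₋/2) δ_θ`, where
`θ_± = θ ± ε m⁻¹ eⱼ`, `Δ_± = U(θ_±) − U(θ)` and `a_± = min(1, exp(−Δ_±))`. -/
theorem coordIntegrator_step_eq_metropolis
    (d : ℕ) (hd : 1 ≤ d) (j : Fin d) (m ε : ℝ) (hm : 0 < m) (hε : 0 < ε)
    (θ : Fin d → ℝ) (U : (Fin d → ℝ) → ℝ) (hU : Measurable U) :
    let μ : Measure ℝ :=
      volume.withDensity fun p => ENNReal.ofReal ((2 * m)⁻¹ * Real.exp (-|p| / m))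
    let T : ℝ → Fin d → ℝ := fun p =>
      if m⁻¹ * |p| >
          U (θ + (ε * m⁻¹ * Real.sign p) • (Pi.single j 1 : Fin d → ℝ)) - U θ then
        θ + (ε * m⁻¹ * Real.sign p) • (Pi.single j 1 : Fin d → ℝ)
      else θ
    let θp : Fin d → ℝ := θ + (ε * m⁻¹) • (Pi.single j 1 : Fin d → ℝ)
    let θm : Fin d → ℝ := θ - (ε * m⁻¹) • (Pi.single j 1 : Fin d → ℝ)
    let ap : ℝ := min 1 (Real.exp (-(U θp - U θ)))
    let am : ℝ := min 1 (Real.exp (-(U θm - U θ)))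
    μ.map T
      = ENNReal.ofReal (ap / 2) • Measure.dirac θp
        + ENNReal.ofReal (am / 2) • Measure.dirac θm
        + ENNReal.ofReal (1 - ap / 2 - am / 2) • Measure.dirac θ := by
  intro μ T θp θm ap am
  have hμdef : μ = volume.withDensity
      fun p => ENNReal.ofReal ((2 * m)⁻¹ * Real.exp (-|p| / m)) := rfl
  have hTdef : T = fun p =>
      if m⁻¹ * |p| >
          U (θ + (ε * m⁻¹ * Real.sign p) • (Pi.single j 1 : Fin d → ℝ)) - U θ then
        θ + (ε * m⁻¹ * Real.sign p) • (Pi.single j 1 : Fin d → ℝ)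
      else θ := rfl
  have hθp : θp = θ + (ε * m⁻¹) • (Pi.single j 1 : Fin d → ℝ) := rfl
  have hθm : θm = θ - (ε * m⁻¹) • (Pi.single j 1 : Fin d → ℝ) := rfl
  have hapdef : ap = min 1 (Real.exp (-(U θp - U θ))) := rfl
  have hamdef : am = min 1 (Real.exp (-(U θm - U θ))) := rfl
  set Δp : ℝ := U θp - U θ with hΔp
  set Δm : ℝ := U θm - U θ with hΔm
  set cp : ℝ := m * max 0 Δp with hcp
  set cm : ℝ := m * max 0 Δm with hcm
  have hcp0 : 0 ≤ cp := mul_nonneg hm.le (le_max_left _ _)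
  have hcm0 : 0 ≤ cm := mul_nonneg hm.le (le_max_left _ _)
  set Sp : Set ℝ := Ioi cp with hSpdef
  set Sm : Set ℝ := Iio (-cm) with hSmdef
  have hSp : MeasurableSet Sp := measurableSet_Ioi
  have hSm : MeasurableSet Sm := measurableSet_Iio
  have key : ∀ x Δ' : ℝ, (Δ' < m⁻¹ * x) ↔ m * Δ' < x := by
    intro x Δ'
    rw [inv_mul_eq_div, lt_div_iff₀ hm, mul_comm]
  -- T coincides with an explicit three-valued piecewise map
  have hT : T = fun p => if p ∈ Sp then θp else if p ∈ Sm then θm else θ := by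
    funext p
    simp only [hTdef]
    rcases lt_trichotomy p 0 with hp | hp | hp
    · have hs : Real.sign p = -1 := Real.sign_of_neg hp
      have habs : |p| = -p := abs_of_neg hp
      have hv : θ + (ε * m⁻¹ * (-1)) • (Pi.single j 1 : Fin d → ℝ) = θm := by
        rw [hθm, mul_neg_one, neg_smul, sub_eq_add_neg]
      have hnotSp : p ∉ Sp := by
        simp only [hSpdef, Set.mem_Ioi, not_lt]
        linarith
      simp only [hs, hv, habs, gt_iff_lt, ← hΔm]
      by_cases hcond : Δm < m⁻¹ * -p
      · have hmem : p ∈ Sm := by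
          simp only [hSmdef, Set.mem_Iio]
          have h1 : m * Δm < -p := (key _ _).mp hcond
          have h2 : cp ≥ 0 := hcp0
          rw [hcm, mul_max_of_nonneg _ _ hm.le, mul_zero]
          have : max 0 (m * Δm) < -p := max_lt (by linarith) h1
          linarith
        rw [if_pos hcond, if_neg hnotSp, if_pos hmem]
      · have hmem : p ∉ Sm := by
          simp only [hSmdef, Set.mem_Iio, not_lt]
          by_contra hlt
          push_neg at hlt
          apply hcond
          rw [key]
          have : cm < -p := by linarith
          rw [hcm, mul_max_of_nonneg _ _ hm.le, mul_zero] at this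
          exact lt_of_le_of_lt (le_max_right _ _) this
        rw [if_neg hcond, if_neg hnotSp, if_neg hmem]
    · subst hp
      have hnot : ¬ (m⁻¹ * |(0:ℝ)| >
          U (θ + (ε * m⁻¹ * Real.sign (0:ℝ)) • (Pi.single j 1 : Fin d → ℝ)) - U θ) := by
        simp [Real.sign_zero]
      rw [if_neg hnot, if_neg (by simp [hSpdef, Set.mem_Ioi, not_lt.mpr hcp0]),
        if_neg (by simp only [hSmdef, Set.mem_Iio, not_lt]; linarith)]
    · have hs : Real.sign p = 1 := Real.sign_of_pos hp
      have habs : |p| = p := abs_of_pos hp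
      have hv : θ + (ε * m⁻¹ * 1) • (Pi.single j 1 : Fin d → ℝ) = θp := by
        rw [hθp, mul_one]
      have hnotSm : p ∉ Sm := by
        simp only [hSmdef, Set.mem_Iio, not_lt]
        linarith
      simp only [hs, hv, habs, gt_iff_lt, ← hΔp]
      by_cases hcond : Δp < m⁻¹ * p
      · have hmem : p ∈ Sp := by
          simp only [hSpdef, Set.mem_Ioi]
          have h1 : m * Δp < p := (key _ _).mp hcond
          rw [hcp, mul_max_of_nonneg _ _ hm.le, mul_zero]
          exact max_lt (by linarith) h1
        rw [if_pos hcond, if_pos hmem]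
      · have hmem : p ∉ Sp := by
          simp only [hSpdef, Set.mem_Ioi, not_lt]
          by_contra hlt
          push_neg at hlt
          apply hcond
          rw [key]
          rw [hcp, mul_max_of_nonneg _ _ hm.le, mul_zero] at hlt
          exact lt_of_le_of_lt (le_max_right _ _) hlt
        rw [if_neg hcond, if_neg hmem, if_neg hnotSm]
  -- measurability
  have hTm : Measurable (fun p => if p ∈ Sp then θp else if p ∈ Sm then θm else θ) :=
    Measurable.ite hSp measurable_const
      (Measurable.ite hSm measurable_const measurable_const)
  -- disjointness and containment
  have hdisj : Disjoint Sp Sm := by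
    rw [Set.disjoint_left]
    intro x hx1 hx2
    simp only [hSpdef, Set.mem_Ioi] at hx1
    simp only [hSmdef, Set.mem_Iio] at hx2
    linarith
  have hSmSpc : Sm ⊆ Spᶜ := by
    intro x hx
    simp only [hSmdef, Set.mem_Iio] at hx
    simp only [hSpdef, Set.mem_compl_iff, Set.mem_Ioi, not_lt]
    linarith
  set M : Set ℝ := (Sp ∪ Sm)ᶜ with hMdef
  -- split the measure
  have hsplit : μ.restrict Sp + μ.restrict Sm + μ.restrict M = μ := by
    have h1 := Measure.restrict_add_restrict_compl (μ := μ) hSp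
    have h2 := Measure.restrict_add_restrict_compl (μ := μ.restrict Spᶜ) hSm
    rw [Measure.restrict_restrict hSm, Measure.restrict_restrict hSm.compl,
      Set.inter_eq_left.mpr hSmSpc] at h2
    have h3 : Smᶜ ∩ Spᶜ = M := by
      rw [hMdef, Set.compl_union, Set.inter_comm]
    rw [h3] at h2
    rw [add_assoc, h2, h1]
  -- map each piece
  have e1 : (μ.restrict Sp).map (fun p => if p ∈ Sp then θp else if p ∈ Sm then θm else θ)
      = μ Sp • Measure.dirac θp := by
    rw [Measure.map_congr (g := fun _ => θp)
      (Filter.eventuallyEq_of_mem (self_mem_ae_restrict hSp) (fun x hx => by simp [hx])),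
      Measure.map_const, Measure.restrict_apply_univ]
  have e2 : (μ.restrict Sm).map (fun p => if p ∈ Sp then θp else if p ∈ Sm then θm else θ)
      = μ Sm • Measure.dirac θm := by
    rw [Measure.map_congr (g := fun _ => θm)
      (Filter.eventuallyEq_of_mem (self_mem_ae_restrict hSm)
        (fun x hx => by
          have : x ∉ Sp := fun h => (hSmSpc hx) h
          simp [hx, this])),
      Measure.map_const, Measure.restrict_apply_univ]
  have e3 : (μ.restrict M).map (fun p => if p ∈ Sp then θp else if p ∈ Sm then θm else θ)
      = μ M • Measure.dirac θ := by
    rw [Measure.map_congr (g := fun _ => θ)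
      (Filter.eventuallyEq_of_mem (self_mem_ae_restrict (hSp.union hSm).compl)
        (fun x hx => by
          simp only [Set.mem_compl_iff, Set.mem_union] at hx
          push_neg at hx
          simp [hx.1, hx.2])),
      Measure.map_const, Measure.restrict_apply_univ]
  -- masses
  have hexp_p : Real.exp (-cp / m) = ap := by
    rw [hcp, neg_div, mul_div_cancel_left₀ _ (ne_of_gt hm), exp_neg_max_eq_min, hapdef, hΔp]
  have hexp_m : Real.exp (-cm / m) = am := by
    rw [hcm, neg_div, mul_div_cancel_left₀ _ (ne_of_gt hm), exp_neg_max_eq_min, hamdef, hΔm]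
  have hμSp : μ Sp = ENNReal.ofReal (ap / 2) := by
    rw [hμdef, hSpdef, laplace_meas_Ioi hm hcp0, hexp_p]
  have hμSm : μ Sm = ENNReal.ofReal (am / 2) := by
    rw [hμdef, hSmdef, laplace_meas_Iio hm hcm0, hexp_m]
  have hμuniv : μ Set.univ = 1 := by rw [hμdef]; exact laplace_meas_univ hm
  have hap0 : 0 ≤ ap := le_min zero_le_one (Real.exp_pos _).le
  have ham0 : 0 ≤ am := le_min zero_le_one (Real.exp_pos _).le
  have hap1 : ap ≤ 1 := min_le_left _ _
  have ham1 : am ≤ 1 := min_le_left _ _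
  have hμM : μ M = ENNReal.ofReal (1 - ap / 2 - am / 2) := by
    have hfin : μ (Sp ∪ Sm) ≠ ⊤ := by
      refine ne_of_lt (lt_of_le_of_lt (measure_mono (Set.subset_univ _)) ?_)
      rw [hμuniv]; exact ENNReal.one_lt_top
    have hcompl := measure_compl (hSp.union hSm) hfin
    rw [hMdef, hcompl, hμuniv, measure_union hdisj hSm, hμSp, hμSm,
      ← ENNReal.ofReal_add (by positivity) (by positivity), ← ENNReal.ofReal_one,
      ← ENNReal.ofReal_sub _ (by positivity)]
    congr 1
    ring
  -- assemble
  rw [hT, ← hsplit, Measure.map_add _ _ hTm, Measure.map_add _ _ hTm, e1, e2, e3,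
    hμSp, hμSm, hμM]
end

section
/- The reflection/refraction map of discontinuous Hamiltonian dynamics is symplectic: let K : ℝ^d → ℝ be twice continuously differentiable, ν ∈ ℝ^d, and α, τ, Δ ∈ ℝ. Let γ : ℝ^d → ℝ be differentiable on an open set and satisfy K(p + γ(p)ν) = K(p) − Δ. Define t_e(θ, p) = (α − ⟨θ, ν⟩)/⟨∇K(p), ν⟩ and Φ(θ, p) = (θ + t_e(θ, p)∇K(p) + (τ − t_e(θ, p))∇K(p + γ(p)ν), p + γ(p)ν). Then at every point (θ, p) where ⟨∇K(p), ν⟩ ≠ 0 and ⟨∇K(p + γ(p)ν), ν⟩ ≠ 0, the map Φ is differentiable and its derivative DΦ preserves the standard symplectic form: ω(DΦ(θ,p) u, DΦ(θ,p) v) = ω(u, v) for all u, v ∈ ℝ^d × ℝ^d, where ω((a, b), (c, e)) = ⟨a, e⟩ − ⟨b, c⟩. -/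
open RealInnerProductSpace


noncomputable def rieszR (E : Type*) [NormedAddCommGroup E] [InnerProductSpace ℝ E]
    [CompleteSpace E] : (E →L[ℝ] ℝ) →L[ℝ] E :=
  LinearMap.mkContinuous
    { toFun := fun w => (InnerProductSpace.toDual ℝ E).symm w
      map_add' := fun w₁ w₂ => by simp
      map_smul' := fun r w => by simp }
    1 (fun w => by simp)

lemma rieszR_inner {E : Type*} [NormedAddCommGroup E] [InnerProductSpace ℝ E]
    [CompleteSpace E] (w : E →L[ℝ] ℝ) (v : E) : ⟪rieszR E w, v⟫ = w v :=
  InnerProductSpace.toDual_symm_apply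

set_option maxHeartbeats 1000000 in
/-- The reflection/refraction map of discontinuous Hamiltonian dynamics is
symplectic: with `K` twice continuously differentiable,
`t_e(θ, p) = (α − ⟨θ, ν⟩)/⟨∇K(p), ν⟩`, and
`Φ(θ, p) = (θ + t_e ∇K(p) + (τ − t_e) ∇K(p + γ(p)ν), p + γ(p)ν)` where the
differentiable function `γ` satisfies the energy constraint
`K(p + γ(p)ν) = K(p) − Δ`, the map `Φ` is differentiable at every point where
`⟨∇K(p), ν⟩ ≠ 0` and `⟨∇K(p + γ(p)ν), ν⟩ ≠ 0`, and its derivative preserves the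
standard symplectic form `ω((a,b),(c,e)) = ⟨a, e⟩ − ⟨b, c⟩`. -/
theorem reflection_refraction_symplectic (d : ℕ) (hd : 1 ≤ d)
    (K : EuclideanSpace ℝ (Fin d) → ℝ) (hK : ContDiff ℝ 2 K)
    (ν : EuclideanSpace ℝ (Fin d)) (α τ Δ : ℝ)
    (γ : EuclideanSpace ℝ (Fin d) → ℝ) (Ω : Set (EuclideanSpace ℝ (Fin d)))
    (hΩ : IsOpen Ω) (hγ : DifferentiableOn ℝ γ Ω)
    (hcons : ∀ p ∈ Ω, K (p + γ p • ν) = K p - Δ) :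
    let te : EuclideanSpace ℝ (Fin d) × EuclideanSpace ℝ (Fin d) → ℝ :=
      fun x => (α - ⟪x.1, ν⟫) / ⟪gradient K x.2, ν⟫
    let Φ : EuclideanSpace ℝ (Fin d) × EuclideanSpace ℝ (Fin d) →
        EuclideanSpace ℝ (Fin d) × EuclideanSpace ℝ (Fin d) :=
      fun x =>
        (x.1 + te x • gradient K x.2 + (τ - te x) • gradient K (x.2 + γ x.2 • ν),
          x.2 + γ x.2 • ν)
    let ω : EuclideanSpace ℝ (Fin d) × EuclideanSpace ℝ (Fin d) →
        EuclideanSpace ℝ (Fin d) × EuclideanSpace ℝ (Fin d) → ℝ :=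
      fun u v => ⟪u.1, v.2⟫ - ⟪u.2, v.1⟫
    ∀ θ : EuclideanSpace ℝ (Fin d), ∀ p ∈ Ω,
      ⟪gradient K p, ν⟫ ≠ 0 → ⟪gradient K (p + γ p • ν), ν⟫ ≠ 0 →
        DifferentiableAt ℝ Φ (θ, p) ∧
          ∀ u v : EuclideanSpace ℝ (Fin d) × EuclideanSpace ℝ (Fin d),
            ω (fderiv ℝ Φ (θ, p) u) (fderiv ℝ Φ (θ, p) v) = ω u v := by
  intro te Φ ω θ p hp ha hb
  have hKd : Differentiable ℝ K := hK.differentiable (by norm_num)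
  have hfd : Differentiable ℝ (fderiv ℝ K) :=
    (hK.fderiv_right (m := 1) (by norm_num)).differentiable one_ne_zero
  set H : EuclideanSpace ℝ (Fin d) → EuclideanSpace ℝ (Fin d) →L[ℝ] EuclideanSpace ℝ (Fin d) :=
    fun x => (rieszR _).comp (fderiv ℝ (fderiv ℝ K) x) with hHdef
  have hH : ∀ x, HasFDerivAt (gradient K) (H x) x := fun x =>
    ((rieszR _).hasFDerivAt).comp x ((hfd x).hasFDerivAt)
  have h1 : ∀ x w z, (⟪H x w, z⟫) = fderiv ℝ (fderiv ℝ K) x w z := fun x w z =>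
    rieszR_inner _ _
  have hHsym : ∀ x u v, ⟪H x u, v⟫ = ⟪H x v, u⟫ := by
    intro x u v
    rw [h1, h1]
    exact second_derivative_symmetric (fun y => (hKd y).hasFDerivAt) ((hfd x).hasFDerivAt) u v
  have hgi : ∀ x (v : EuclideanSpace ℝ (Fin d)), ⟪gradient K x, v⟫ = fderiv ℝ K x v := fun x v =>
    InnerProductSpace.toDual_symm_apply
  -- gamma and the shift map
  have hγd : DifferentiableAt ℝ γ p := hγ.differentiableAt (hΩ.mem_nhds hp)
  set dγ := fderiv ℝ γ p with hdγdef
  have hγp : HasFDerivAt γ dγ p := hγd.hasFDerivAt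
  set q := p + γ p • ν with hqdef
  set dm : EuclideanSpace ℝ (Fin d) →L[ℝ] EuclideanSpace ℝ (Fin d) :=
    ContinuousLinearMap.id ℝ _ + dγ.smulRight ν with hdm
  have hm : HasFDerivAt (fun y => y + γ y • ν) dm p := (hasFDerivAt_id p).add (hγp.smul_const ν)
  -- the energy conservation derivative identity
  have hcons' : ∀ w, ⟪gradient K q, w⟫ + dγ w * ⟪gradient K q, ν⟫ = ⟪gradient K p, w⟫ := by
    have hc1 : HasFDerivAt (fun y => K (y + γ y • ν)) ((fderiv ℝ K q).comp dm) p :=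
      (hKd q).hasFDerivAt.comp p hm
    have hc2 : HasFDerivAt (fun y => K (y + γ y • ν)) (fderiv ℝ K p) p := by
      have heq : (fun y => K (y + γ y • ν)) =ᶠ[nhds p] (fun y => K y - Δ) :=
        Filter.eventuallyEq_of_mem (hΩ.mem_nhds hp) (fun y hy => hcons y hy)
      exact ((hKd p).hasFDerivAt.sub_const Δ).congr_of_eventuallyEq heq
    have huniq := hc1.unique hc2
    intro w
    have happ := congrArg (fun (L : EuclideanSpace ℝ (Fin d) →L[ℝ] ℝ) => L w) huniq
    simp only [ContinuousLinearMap.coe_comp', Function.comp_apply, hdm,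
      ContinuousLinearMap.add_apply, ContinuousLinearMap.coe_id', id_eq,
      ContinuousLinearMap.smulRight_apply] at happ
    rw [hgi, hgi, hgi, ← happ, map_add, (fderiv ℝ K q).map_smul, smul_eq_mul]
  -- pieces of the derivative of Φ at (θ, p)
  have hfst : HasFDerivAt (fun x : EuclideanSpace ℝ (Fin d) × EuclideanSpace ℝ (Fin d) => x.1)
      (ContinuousLinearMap.fst ℝ _ _) (θ, p) := hasFDerivAt_fst
  have hsnd : HasFDerivAt (fun x : EuclideanSpace ℝ (Fin d) × EuclideanSpace ℝ (Fin d) => x.2)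
      (ContinuousLinearMap.snd ℝ _ _) (θ, p) := hasFDerivAt_snd
  have hnum := (hasFDerivAt_const α
    ((θ, p) : EuclideanSpace ℝ (Fin d) × EuclideanSpace ℝ (Fin d))).sub
    (HasFDerivAt.inner ℝ hfst (hasFDerivAt_const ν _))
  have hden := HasFDerivAt.inner ℝ ((hH p).comp _ hsnd) (hasFDerivAt_const ν _)
  have hinv := (hasDerivAt_inv ha).comp_hasFDerivAt ((θ, p) : EuclideanSpace ℝ (Fin d) × EuclideanSpace ℝ (Fin d)) hden
  have heqte : te =ᶠ[nhds ((θ, p) : EuclideanSpace ℝ (Fin d) × EuclideanSpace ℝ (Fin d))]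
      (fun x => (α - ⟪x.1, ν⟫) * (⟪gradient K x.2, ν⟫)⁻¹) :=
    Filter.Eventually.of_forall fun x => div_eq_mul_inv _ _
  have hte := (hnum.mul hinv).congr_of_eventuallyEq heqte
  have hgsnd := (hH p).comp ((θ, p) : EuclideanSpace ℝ (Fin d) × EuclideanSpace ℝ (Fin d)) hsnd
  have hGsnd := ((hH q).comp p hm).comp
    ((θ, p) : EuclideanSpace ℝ (Fin d) × EuclideanSpace ℝ (Fin d)) hsnd
  have hγsnd := hγp.comp ((θ, p) : EuclideanSpace ℝ (Fin d) × EuclideanSpace ℝ (Fin d)) hsnd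
  have hΦ₂ := hsnd.add (hγsnd.smul_const ν)
  have hΦ := HasFDerivAt.prodMk ((hfst.add (hte.smul hgsnd)).add
    (((hasFDerivAt_const τ ((θ, p) : EuclideanSpace ℝ (Fin d) × EuclideanSpace ℝ (Fin d))).sub
      hte).smul hGsnd)) hΦ₂
  have hdiff : DifferentiableAt ℝ Φ (θ, p) := hΦ.differentiableAt
  refine ⟨hdiff, ?_⟩
  have hΦ' : HasFDerivAt Φ _ (θ, p) := hΦ
  have hfe := hΦ'.fderiv
  intro u v
  rw [hfe]
  simp only [ContinuousLinearMap.prod_apply, ContinuousLinearMap.add_apply,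
    ContinuousLinearMap.coe_comp', Function.comp_apply, ContinuousLinearMap.smulRight_apply,
    ContinuousLinearMap.coe_fst', ContinuousLinearMap.coe_snd',
    ContinuousLinearMap.smul_apply, ContinuousLinearMap.sub_apply,
    ContinuousLinearMap.zero_apply, ContinuousLinearMap.coe_smul', Pi.smul_apply,
    fderivInnerCLM_apply, inner_zero_right, smul_eq_mul, ContinuousLinearMap.coe_id', id_eq,
    ω]
  simp only [zero_add, zero_sub, hdm, ContinuousLinearMap.add_apply, Pi.sub_apply,
    ContinuousLinearMap.coe_id', id_eq, ContinuousLinearMap.smulRight_apply]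
  have keyUV : ∀ (x1 x2 y2 : EuclideanSpace ℝ (Fin d)) (Dx t0 : ℝ),
      (⟪x1 + (t0 • (H p) x2 + Dx • gradient K p) +
          ((τ - t0) • (H q) (x2 + dγ x2 • ν) + -Dx • gradient K (p + γ p • ν)),
        y2 + dγ y2 • ν⟫) =
      ⟪x1, y2⟫ + t0 * ⟪(H p) x2, y2⟫ +
        (τ - t0) * ⟪(H q) (x2 + dγ x2 • ν), y2 + dγ y2 • ν⟫ +
        dγ y2 * (⟪x1, ν⟫ + Dx * ⟪gradient K p, ν⟫ + t0 * ⟪(H p) x2, ν⟫) := by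
    intro x1 x2 y2 Dx t0
    have h2 := hcons' y2
    rw [hqdef] at h2
    simp only [inner_add_left, inner_add_right, real_inner_smul_left, real_inner_smul_right,
      inner_neg_left]
    linear_combination (-Dx) * h2
  have hres : ∀ (x1 x2 : EuclideanSpace ℝ (Fin d)),
      ⟪x1, ν⟫ + ((α - ⟪θ, ν⟫) * (-(⟪gradient K p, ν⟫ ^ 2)⁻¹ * ⟪(H p) x2, ν⟫) +
        (⟪gradient K p, ν⟫)⁻¹ * -⟪x1, ν⟫) * ⟪gradient K p, ν⟫ +
        te (θ, p) * ⟪(H p) x2, ν⟫ = 0 := by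
    intro x1 x2
    have hscal : ∀ X h c0 A : ℝ, A ≠ 0 →
        X + (c0 * (-(A ^ 2)⁻¹ * h) + A⁻¹ * -X) * A + c0 / A * h = 0 := by
      intro X h c0 A hA
      field_simp
      ring
    rw [show te (θ, p) = (α - ⟪θ, ν⟫) / ⟪gradient K p, ν⟫ from rfl]
    exact hscal _ _ _ _ ha
  rw [real_inner_comm _ (u.2 + dγ u.2 • ν)]
  rw [keyUV u.1 u.2 v.2, keyUV v.1 v.2 u.2]
  rw [hHsym p v.2 u.2, hHsym q (v.2 + dγ v.2 • ν) (u.2 + dγ u.2 • ν),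
    real_inner_comm u.2 v.1]
  linear_combination dγ v.2 * hres u.1 u.2 - dγ u.2 * hres v.1 v.2
end

section
/- Energy error of the symplectic Euler step with explicit leading term: let U, K : ℝ^d → ℝ be three times continuously differentiable and fix (θ₀, p₀) ∈ ℝ^d × ℝ^d. For ε > 0 define p*(ε) = p₀ − ε∇U(θ₀) and θ*(ε) = θ₀ + ε∇K(p*(ε)), and let H(θ, p) = U(θ) + K(p). Then, as ε → 0⁺, H(θ*(ε), p*(ε)) − H(θ₀, p₀) − (ε²/2)·(⟨∇K(p₀), ∇²U(θ₀)[∇K(p₀)]⟩ − ⟨∇U(θ₀), ∇²K(p₀)[∇U(θ₀)]⟩) = O(ε³). -/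
open Asymptotics RealInnerProductSpace

section Aux

open Set InnerProductSpace

private lemma iterDW_eq {F} [NormedAddCommGroup F] [NormedSpace ℝ F]
    {f : ℝ → F} {n k : ℕ} (hf : ContDiff ℝ n f)
    {s : Set ℝ} (hs : UniqueDiffOn ℝ s) {x : ℝ} (hx : x ∈ s) (hk : k ≤ n) :
    iteratedDerivWithin k f s x = iteratedDeriv k f x := by
  rw [iteratedDerivWithin_eq_iteratedFDerivWithin, iteratedDeriv_eq_iteratedFDeriv]
  congr 1
  have h := (contDiff_iff_ftaylorSeries.mp hf).hasFTaylorSeriesUpToOn s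
  exact (h.eq_iteratedFDerivWithin_of_uniqueDiffOn (by exact_mod_cast hk) hs hx).symm

private lemma taylor2_isBigO {F} [NormedAddCommGroup F] [NormedSpace ℝ F] {f : ℝ → F}
    (hf : ContDiff ℝ 3 f) :
    (fun x : ℝ => f x - f 0 - x • deriv f 0 - (x ^ 2 / 2) • deriv (deriv f) 0)
      =O[nhdsWithin 0 (Set.Ioi 0)] fun x => x ^ 3 := by
  obtain ⟨C, hC⟩ := exists_taylor_mean_remainder_bound (n := 2) zero_le_one
    (hf.contDiffOn (s := Icc 0 1))
  refine IsBigO.of_bound C ?_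
  filter_upwards [Ioo_mem_nhdsGT_of_mem (by simp : (0:ℝ) ∈ Ico 0 1)] with x hx
  have h := hC x ⟨hx.1.le, hx.2.le⟩
  rw [taylor_within_apply] at h
  have e0 := iterDW_eq (k := 0) hf (uniqueDiffOn_Icc one_pos)
    (left_mem_Icc.2 zero_le_one) (by norm_num)
  have e1 := iterDW_eq (k := 1) hf (uniqueDiffOn_Icc one_pos)
    (left_mem_Icc.2 zero_le_one) (by norm_num)
  have e2 := iterDW_eq (k := 2) hf (uniqueDiffOn_Icc one_pos)
    (left_mem_Icc.2 zero_le_one) (by norm_num)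
  simp only [Finset.sum_range_succ, Finset.sum_range_zero, e0, e1, e2, iteratedDeriv_succ,
    iteratedDeriv_zero, zero_add, sub_zero] at h
  have heq : f x - f 0 - x • deriv f 0 - (x ^ 2 / 2) • deriv (deriv f) 0
      = f x - (((Nat.factorial 0 : ℝ)⁻¹ * x ^ 0) • f 0
        + ((Nat.factorial 1 : ℝ)⁻¹ * x ^ 1) • deriv f 0
        + ((Nat.factorial 2 : ℝ)⁻¹ * x ^ 2) • deriv (deriv f) 0) := by
    simp only [Nat.factorial]; ring_nf; module
  rw [heq]
  calc ‖_‖ ≤ C * x ^ 3 := by convert h using 3 <;> simp [Nat.factorial]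
    _ = C * ‖x ^ 3‖ := by rw [Real.norm_eq_abs, abs_of_pos (pow_pos hx.1 3)]

private lemma taylor1_isBigO {F} [NormedAddCommGroup F] [NormedSpace ℝ F] {f : ℝ → F}
    (hf : ContDiff ℝ 2 f) :
    (fun x : ℝ => f x - f 0 - x • deriv f 0)
      =O[nhdsWithin 0 (Set.Ioi 0)] fun x => x ^ 2 := by
  obtain ⟨C, hC⟩ := exists_taylor_mean_remainder_bound (n := 1) zero_le_one
    (hf.contDiffOn (s := Icc 0 1))
  refine IsBigO.of_bound C ?_
  filter_upwards [Ioo_mem_nhdsGT_of_mem (by simp : (0:ℝ) ∈ Ico 0 1)] with x hx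
  have h := hC x ⟨hx.1.le, hx.2.le⟩
  rw [taylor_within_apply] at h
  have e0 := iterDW_eq (k := 0) hf (uniqueDiffOn_Icc one_pos)
    (left_mem_Icc.2 zero_le_one) (by norm_num)
  have e1 := iterDW_eq (k := 1) hf (uniqueDiffOn_Icc one_pos)
    (left_mem_Icc.2 zero_le_one) (by norm_num)
  simp only [Finset.sum_range_succ, Finset.sum_range_zero, e0, e1, iteratedDeriv_succ,
    iteratedDeriv_zero, zero_add, sub_zero] at h
  have heq : f x - f 0 - x • deriv f 0
      = f x - (((Nat.factorial 0 : ℝ)⁻¹ * x ^ 0) • f 0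
        + ((Nat.factorial 1 : ℝ)⁻¹ * x ^ 1) • deriv f 0) := by
    simp only [Nat.factorial]; ring_nf; module
  rw [heq]
  calc ‖_‖ ≤ C * x ^ 2 := by convert h using 3 <;> simp [Nat.factorial]
    _ = C * ‖x ^ 2‖ := by rw [Real.norm_eq_abs, abs_of_pos (pow_pos hx.1 2)]

variable {E : Type*} [NormedAddCommGroup E] [InnerProductSpace ℝ E] [CompleteSpace E]

/-- evaluation of gradient against a vector -/
private lemma inner_grad (f : E → ℝ) (x v : E) : ⟪gradient f x, v⟫ = fderiv ℝ f x v := by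
  simp [gradient, InnerProductSpace.toDual_symm_apply]

private noncomputable def Jmap (E : Type*) [NormedAddCommGroup E] [InnerProductSpace ℝ E]
    [CompleteSpace E] : (E →L[ℝ] ℝ) →L[ℝ] E :=
  ((toDual ℝ E).symm.toContinuousLinearEquiv.toContinuousLinearMap)

private lemma grad_eq_J (f : E → ℝ) : gradient f = fun x => Jmap E (fderiv ℝ f x) := rfl

private lemma contDiff_grad {f : E → ℝ} (hf : ContDiff ℝ 3 f) : ContDiff ℝ 2 (gradient f) := by
  rw [grad_eq_J]
  exact (Jmap E).contDiff.comp (hf.fderiv_right (by norm_num))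

private lemma hasFDerivAt_grad {f : E → ℝ} (hf : ContDiff ℝ 3 f) (x : E) :
    HasFDerivAt (gradient f) ((Jmap E).comp (fderiv ℝ (fderiv ℝ f) x)) x := by
  have hdf : DifferentiableAt ℝ (fderiv ℝ f) x :=
    (hf.fderiv_right (m := 2) (by norm_num)).differentiable (by norm_num) x
  rw [grad_eq_J]
  exact (Jmap E).hasFDerivAt.comp x hdf.hasFDerivAt

private lemma inner_fderiv_grad {f : E → ℝ} (hf : ContDiff ℝ 3 f) (x v w : E) :
    ⟪w, fderiv ℝ (gradient f) x v⟫ = fderiv ℝ (fderiv ℝ f) x v w := by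
  rw [(hasFDerivAt_grad hf x).fderiv, real_inner_comm]
  simp [Jmap, InnerProductSpace.toDual_symm_apply]

set_option maxHeartbeats 1000000 in
private theorem main_aux
    (U K : E → ℝ) (hU : ContDiff ℝ 3 U) (hK : ContDiff ℝ 3 K) (θ₀ p₀ : E) :
    (fun ε : ℝ =>
        (U (θ₀ + ε • gradient K (p₀ - ε • gradient U θ₀)) + K (p₀ - ε • gradient U θ₀))
          - (U θ₀ + K p₀)
          - (ε ^ 2 / 2) *
              (⟪gradient K p₀, fderiv ℝ (gradient U) θ₀ (gradient K p₀)⟫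
                - ⟪gradient U θ₀, fderiv ℝ (gradient K) p₀ (gradient U θ₀)⟫))
      =O[nhdsWithin 0 (Set.Ioi 0)] fun ε : ℝ => ε ^ 3 := by
  set l := nhdsWithin (0:ℝ) (Set.Ioi 0) with hl
  have hUd : Differentiable ℝ U := hU.differentiable (by norm_num)
  have hKd : Differentiable ℝ K := hK.differentiable (by norm_num)
  set a : E := gradient U θ₀ with ha
  set b : E := gradient K p₀ with hb
  set A : E →L[ℝ] E := fderiv ℝ (gradient U) θ₀ with hA
  set B : E →L[ℝ] E := fderiv ℝ (gradient K) p₀ with hB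
  -- momentum curve
  have hcC : ContDiff ℝ 3 (fun ε : ℝ => p₀ - ε • a) :=
    contDiff_const.sub (contDiff_id.smul contDiff_const)
  have hc' : ∀ ε : ℝ, HasDerivAt (fun ε : ℝ => p₀ - ε • a) (-a) ε := fun ε => by
    simpa using ((hasDerivAt_id ε).smul_const a).const_sub p₀
  have hc0 : p₀ - (0:ℝ) • a = p₀ := by simp
  -- position curve for ψ
  have hc2C : ContDiff ℝ 3 (fun ε : ℝ => θ₀ + ε • b) :=
    contDiff_const.add (contDiff_id.smul contDiff_const)
  have hc2' : ∀ ε : ℝ, HasDerivAt (fun ε : ℝ => θ₀ + ε • b) b ε := fun ε => by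
    simpa using ((hasDerivAt_id ε).smul_const b).const_add θ₀
  have hc20 : θ₀ + (0:ℝ) • b = θ₀ := by simp
  -- φ
  set φ : ℝ → ℝ := fun ε => K (p₀ - ε • a) with hφdef
  have hφC : ContDiff ℝ 3 φ := hK.comp hcC
  have hφ' : ∀ ε, HasDerivAt φ (fderiv ℝ K (p₀ - ε • a) (-a)) ε := fun ε =>
    (hKd (p₀ - ε • a)).hasFDerivAt.comp_hasDerivAt ε (hc' ε)
  have hdφ : deriv φ = fun ε => fderiv ℝ K (p₀ - ε • a) (-a) := funext fun ε => (hφ' ε).deriv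
  have hdK1 : DifferentiableAt ℝ (fderiv ℝ K) p₀ :=
    (hK.fderiv_right (m := 2) (by norm_num)).differentiable (by norm_num) p₀
  have hstepK : HasFDerivAt (fun p => fderiv ℝ K p (-a))
      ((ContinuousLinearMap.apply ℝ ℝ (-a)).comp (fderiv ℝ (fderiv ℝ K) p₀)) p₀ :=
    (ContinuousLinearMap.apply ℝ ℝ (-a)).hasFDerivAt.comp p₀ hdK1.hasFDerivAt
  have hφ2 : HasDerivAt (deriv φ) (fderiv ℝ (fderiv ℝ K) p₀ (-a) (-a)) 0 := by
    rw [hdφ]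
    have h := (hc0 ▸ hstepK).comp_hasDerivAt 0 (hc' 0)
    simpa [Function.comp_def] using h
  have hd2φ : deriv (deriv φ) 0 = fderiv ℝ (fderiv ℝ K) p₀ (-a) (-a) := hφ2.deriv
  have hφ0 : φ 0 = K p₀ := by rw [hφdef]; simp
  have hdφ0 : deriv φ 0 = fderiv ℝ K p₀ (-a) := by rw [hdφ]; simp
  -- ψ
  set ψ : ℝ → ℝ := fun ε => U (θ₀ + ε • b) with hψdef
  have hψC : ContDiff ℝ 3 ψ := hU.comp hc2C
  have hψ' : ∀ ε, HasDerivAt ψ (fderiv ℝ U (θ₀ + ε • b) b) ε := fun ε =>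
    (hUd (θ₀ + ε • b)).hasFDerivAt.comp_hasDerivAt ε (hc2' ε)
  have hdψ : deriv ψ = fun ε => fderiv ℝ U (θ₀ + ε • b) b := funext fun ε => (hψ' ε).deriv
  have hdU1 : DifferentiableAt ℝ (fderiv ℝ U) θ₀ :=
    (hU.fderiv_right (m := 2) (by norm_num)).differentiable (by norm_num) θ₀
  have hstepU : HasFDerivAt (fun p => fderiv ℝ U p b)
      ((ContinuousLinearMap.apply ℝ ℝ b).comp (fderiv ℝ (fderiv ℝ U) θ₀)) θ₀ :=
    (ContinuousLinearMap.apply ℝ ℝ b).hasFDerivAt.comp θ₀ hdU1.hasFDerivAt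
  have hψ2 : HasDerivAt (deriv ψ) (fderiv ℝ (fderiv ℝ U) θ₀ b b) 0 := by
    rw [hdψ]
    have h := (hc20 ▸ hstepU).comp_hasDerivAt 0 (hc2' 0)
    simpa [Function.comp_def] using h
  have hd2ψ : deriv (deriv ψ) 0 = fderiv ℝ (fderiv ℝ U) θ₀ b b := hψ2.deriv
  have hψ0 : ψ 0 = U θ₀ := by rw [hψdef]; simp
  have hdψ0 : deriv ψ 0 = fderiv ℝ U θ₀ b := by rw [hdψ]; simp
  -- v
  set v : ℝ → E := fun ε => gradient K (p₀ - ε • a) with hvdef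
  have hvC : ContDiff ℝ 2 v := (contDiff_grad hK).comp (hcC.of_le (by norm_num))
  have hv' : HasDerivAt v (B (-a)) 0 := by
    have hdg : DifferentiableAt ℝ (gradient K) p₀ :=
      ((contDiff_grad hK).differentiable (by norm_num)) p₀
    have h := (hc0 ▸ hdg.hasFDerivAt).comp_hasDerivAt 0 (hc' 0)
    simpa [hB, Function.comp_def] using h
  have hv0 : v 0 = b := by rw [hvdef]; simp [hb]
  have hdv0 : deriv v 0 = B (-a) := hv'.deriv
  -- Taylor expansions
  have O1 : (fun ε : ℝ => φ ε - K p₀ - ε • fderiv ℝ K p₀ (-a)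
      - (ε ^ 2 / 2) • fderiv ℝ (fderiv ℝ K) p₀ (-a) (-a)) =O[l] fun ε => ε ^ 3 := by
    have h := taylor2_isBigO hφC
    rwa [hφ0, hdφ0, hd2φ] at h
  have O2 : (fun ε : ℝ => ψ ε - U θ₀ - ε • fderiv ℝ U θ₀ b
      - (ε ^ 2 / 2) • fderiv ℝ (fderiv ℝ U) θ₀ b b) =O[l] fun ε => ε ^ 3 := by
    have h := taylor2_isBigO hψC
    rwa [hψ0, hdψ0, hd2ψ] at h
  have O3 : (fun ε : ℝ => v ε - b - ε • B (-a)) =O[l] fun ε => ε ^ 2 := by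
    have h := taylor1_isBigO hvC
    rwa [hv0, hdv0] at h
  -- v ε - b is O(ε)
  have hε2ε : (fun ε : ℝ => ε ^ 2) =O[l] fun ε => ε := by
    refine IsBigO.of_bound 1 ?_
    filter_upwards [Ioo_mem_nhdsGT_of_mem (by simp : (0:ℝ) ∈ Ico 0 1)] with ε hε
    rw [one_mul, Real.norm_eq_abs, Real.norm_eq_abs, abs_of_pos hε.1, abs_of_pos (pow_pos hε.1 2),
      pow_two]
    nlinarith [hε.1, hε.2]
  have hBa : (fun ε : ℝ => ε • B (-a)) =O[l] fun ε => ε := by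
    refine IsBigO.of_bound ‖B (-a)‖ ?_
    filter_upwards with ε
    rw [norm_smul, mul_comm]
  have hvb : (fun ε : ℝ => v ε - b) =O[l] fun ε => ε := by
    have h := (O3.trans hε2ε).add hBa
    refine h.congr_left fun ε => ?_
    abel
  obtain ⟨C₁, hC₁pos, hC₁⟩ := hvb.exists_pos
  have hC₁' := hC₁.bound
  -- the hard remainder r₄
  set q : ℝ → ℝ := fun ε => fderiv ℝ U θ₀ (v ε - b - ε • B (-a)) with hqdef
  have Oq : (fun ε : ℝ => ε * q ε) =O[l] fun ε => ε ^ 3 := by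
    have h1 : q =O[l] fun ε => ε ^ 2 :=
      ((fderiv ℝ U θ₀).isBigO_comp _ l).trans O3
    have h2 := (isBigO_refl (fun ε : ℝ => ε) l).mul h1
    exact h2.trans (by
      refine IsBigO.of_bound 1 ?_
      filter_upwards with ε
      simp [abs_mul, pow_succ, pow_two, abs_mul, mul_comm, mul_assoc, mul_left_comm])
  -- Lipschitz bound for fderiv U near θ₀
  obtain ⟨L, t, htmem, hLip⟩ :=
    ContDiffAt.exists_lipschitzOnWith
      ((hU.fderiv_right (m := 2) (by norm_num)).contDiffAt.of_le (by norm_num))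
  obtain ⟨rr, hrrpos, hball⟩ := Metric.mem_nhds_iff.mp htmem
  have hθ₀t : θ₀ ∈ t := mem_of_mem_nhds htmem
  set M : ℝ := ‖b‖ + 1 with hM
  have hMpos : 0 < M := by positivity
  have hbM : ‖b‖ ≤ M := by simp [hM]
  -- eventual bound on ‖v ε‖
  have hvM : ∀ᶠ ε in l, ‖v ε‖ ≤ M := by
    have hcont : Filter.Tendsto v (nhds 0) (nhds b) := by
      have := (hvC.continuous).continuousAt (x := (0:ℝ))
      rwa [ContinuousAt, hv0] at this
    have h1 : ∀ᶠ ε in nhds (0:ℝ), ‖v ε‖ ≤ M :=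
      hcont.norm.eventually_le_const (show ‖b‖ < M by simp [hM])
    exact h1.filter_mono nhdsWithin_le_nhds
  -- the remainder r₄
  set r₄ : ℝ → ℝ := fun ε => U (θ₀ + ε • v ε) - ψ ε - fderiv ℝ U θ₀ (ε • v ε - ε • b)
    with hr₄def
  have O4 : r₄ =O[l] fun ε => ε ^ 3 := by
    refine IsBigO.of_bound (L * M * C₁) ?_
    have hsmall : ∀ᶠ ε in l, ε ∈ Ioo (0:ℝ) (rr / (M + 1)) :=
      Ioo_mem_nhdsGT_of_mem (by constructor <;> [skip; positivity] <;> simp)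
    filter_upwards [hsmall, hvM, hC₁'] with ε hε hvMε hC₁ε
    have hεpos : 0 < ε := hε.1
    have hMε : M * ε < rr := by
      have h2 := hε.2
      rw [lt_div_iff₀ (by positivity : (0:ℝ) < M + 1)] at h2
      nlinarith [hεpos, hMpos]
    have hMεnonneg : 0 ≤ M * ε := by positivity
    set s : Set E := Metric.closedBall θ₀ (M * ε) with hsdef
    have hssub : s ⊆ t := fun z hz => hball (by
      rw [Metric.mem_ball]
      exact lt_of_le_of_lt (Metric.mem_closedBall.mp hz) hMε)
    have hxmem : θ₀ + ε • b ∈ s := by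
      rw [hsdef, Metric.mem_closedBall, dist_eq_norm, add_sub_cancel_left, norm_smul,
        Real.norm_eq_abs, abs_of_pos hεpos, mul_comm]
      exact mul_le_mul_of_nonneg_right hbM hεpos.le
    have hymem : θ₀ + ε • v ε ∈ s := by
      rw [hsdef, Metric.mem_closedBall, dist_eq_norm, add_sub_cancel_left, norm_smul,
        Real.norm_eq_abs, abs_of_pos hεpos, mul_comm]
      exact mul_le_mul_of_nonneg_right hvMε hεpos.le
    -- mean value estimate for W z = U z - fderiv U θ₀ z
    have hW : ∀ z ∈ s, HasFDerivWithinAt (fun z => U z - fderiv ℝ U θ₀ z)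
        (fderiv ℝ U z - fderiv ℝ U θ₀) s z := fun z _ =>
      ((hUd z).hasFDerivAt.sub (fderiv ℝ U θ₀).hasFDerivAt).hasFDerivWithinAt
    have hbound : ∀ z ∈ s, ‖fderiv ℝ U z - fderiv ℝ U θ₀‖ ≤ L * (M * ε) := fun z hz => by
      have h1 : ‖fderiv ℝ U z - fderiv ℝ U θ₀‖ ≤ L * ‖z - θ₀‖ := by
        simpa [dist_eq_norm] using hLip.dist_le_mul z (hssub hz) θ₀ hθ₀t
      refine h1.trans (mul_le_mul_of_nonneg_left ?_ L.2)
      rw [← dist_eq_norm]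
      exact Metric.mem_closedBall.mp hz
    have hmv := (convex_closedBall θ₀ (M * ε)).norm_image_sub_le_of_norm_hasFDerivWithin_le
      hW hbound hxmem hymem
    have hyx : (θ₀ + ε • v ε) - (θ₀ + ε • b) = ε • v ε - ε • b := by abel
    have hr₄eq : r₄ ε = (fun z => U z - fderiv ℝ U θ₀ z) (θ₀ + ε • v ε)
        - (fun z => U z - fderiv ℝ U θ₀ z) (θ₀ + ε • b) := by
      rw [hr₄def]
      simp only [hψdef]
      rw [← hyx, map_sub]
      ring
    rw [hr₄eq, Real.norm_eq_abs]
    refine le_trans hmv ?_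
    rw [hyx]
    have h5 : ‖ε • v ε - ε • b‖ = ε * ‖v ε - b‖ := by
      rw [← smul_sub, norm_smul, Real.norm_eq_abs, abs_of_pos hεpos]
    have h6 : ‖v ε - b‖ ≤ C₁ * ε := by
      have := hC₁ε
      rwa [Real.norm_eq_abs, abs_of_pos hεpos] at this
    have h7 : ‖(ε:ℝ) ^ 3‖ = ε ^ 3 := by
      rw [Real.norm_eq_abs, abs_of_pos (pow_pos hεpos 3)]
    rw [h5, h7]
    calc L * (M * ε) * (ε * ‖v ε - b‖) ≤ L * (M * ε) * (ε * (C₁ * ε)) := by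
          refine mul_le_mul_of_nonneg_left (mul_le_mul_of_nonneg_left h6 hεpos.le) ?_
          positivity
      _ = L * M * C₁ * ε ^ 3 := by ring
  -- pointwise scalar identities
  have iU : ∀ w : E, fderiv ℝ U θ₀ w = ⟪a, w⟫ := fun w => by
    rw [ha]; exact (inner_grad U θ₀ w).symm
  have iKm : fderiv ℝ K p₀ (-a) = -⟪a, b⟫ := by
    rw [← inner_grad, ← hb, inner_neg_right, real_inner_comm]
  have iA : fderiv ℝ (fderiv ℝ U) θ₀ b b = ⟪b, A b⟫ := by
    rw [hA]; exact (inner_fderiv_grad hU θ₀ b b).symm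
  have iB : fderiv ℝ (fderiv ℝ K) p₀ (-a) (-a) = ⟪a, B a⟫ := by
    have h := inner_fderiv_grad hK p₀ (-a) (-a)
    rw [← hB, map_neg, inner_neg_neg] at h
    exact h.symm
  have key : (fun ε : ℝ =>
      (U (θ₀ + ε • gradient K (p₀ - ε • a)) + K (p₀ - ε • a)) - (U θ₀ + K p₀)
        - (ε ^ 2 / 2) * (⟪b, A b⟫ - ⟪a, B a⟫))
      = fun ε : ℝ =>
      (φ ε - K p₀ - ε • fderiv ℝ K p₀ (-a)
          - (ε ^ 2 / 2) • fderiv ℝ (fderiv ℝ K) p₀ (-a) (-a))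
        + (ψ ε - U θ₀ - ε • fderiv ℝ U θ₀ b
          - (ε ^ 2 / 2) • fderiv ℝ (fderiv ℝ U) θ₀ b b)
        + r₄ ε + ε * q ε := by
    funext ε
    have e1 : fderiv ℝ U θ₀ (ε • v ε - ε • b) = ε * ⟪a, v ε⟫ - ε * ⟪a, b⟫ := by
      rw [map_sub, map_smul, map_smul, iU, iU, smul_eq_mul, smul_eq_mul]
    have e2 : q ε = ⟪a, v ε⟫ - ⟪a, b⟫ + ε * ⟪a, B a⟫ := by
      simp only [hqdef]
      rw [iU, inner_sub_right, inner_sub_right, inner_smul_right, map_neg, inner_neg_right]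
      ring
    have e3 : r₄ ε = U (θ₀ + ε • v ε) - ψ ε - (ε * ⟪a, v ε⟫ - ε * ⟪a, b⟫) := by
      rw [hr₄def]; simp only [e1]
    have e4 : U (θ₀ + ε • gradient K (p₀ - ε • a)) = U (θ₀ + ε • v ε) := rfl
    have e5 : K (p₀ - ε • a) = φ ε := rfl
    have e6 : fderiv ℝ U θ₀ b = ⟪a, b⟫ := iU b
    rw [e3, e4, e5, e2, iKm, iA, iB, e6, smul_eq_mul, smul_eq_mul, smul_eq_mul, smul_eq_mul]
    ring
  rw [key]
  exact ((O1.add O2).add O4).add Oq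

end Aux

/-- Energy error of the symplectic Euler step with explicit leading term: with
`p*(ε) = p₀ − ε∇U(θ₀)`, `θ*(ε) = θ₀ + ε∇K(p*(ε))` and `H(θ, p) = U(θ) + K(p)`,
as `ε → 0⁺`,
`H(θ*(ε), p*(ε)) − H(θ₀, p₀)
  − (ε²/2)·(⟨∇K(p₀), ∇²U(θ₀)[∇K(p₀)]⟩ − ⟨∇U(θ₀), ∇²K(p₀)[∇U(θ₀)]⟩) = O(ε³)`. -/
theorem symplectic_euler_energy_error (d : ℕ) (hd : 1 ≤ d)
    (U K : EuclideanSpace ℝ (Fin d) → ℝ) (hU : ContDiff ℝ 3 U) (hK : ContDiff ℝ 3 K)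
    (θ₀ p₀ : EuclideanSpace ℝ (Fin d)) :
    (fun ε : ℝ =>
        (U (θ₀ + ε • gradient K (p₀ - ε • gradient U θ₀)) + K (p₀ - ε • gradient U θ₀))
          - (U θ₀ + K p₀)
          - (ε ^ 2 / 2) *
              (⟪gradient K p₀, fderiv ℝ (gradient U) θ₀ (gradient K p₀)⟫
                - ⟪gradient U θ₀, fderiv ℝ (gradient K) p₀ (gradient U θ₀)⟫))
      =O[nhdsWithin 0 (Set.Ioi 0)] fun ε : ℝ => ε ^ 3 :=
  main_aux U K hU hK θ₀ p₀
end
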